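/- Let $(X, \Sigma, \mu)$ be a nonatomic (diffuse) probability space and $0 \le p < \infty$. There is no map $\varphi \colon \mathcal{L}^p(\mathbb{R}, \mu) \to \mathcal{L}^p(\mathbb{R}, \mu)$ satisfying: (1) $\varphi(f) = f$ $\mu$-almost everywhere for every $f$, and (2) $f_1 \le f_2$ $\mu$-almost everywhere implies $\varphi(f_1) \le \varphi(f_2)$ pointwise everywhere. -/

import Mathlib

open MeasureTheory
open scoped ENNReal

/-- Membership in `ℒ^p(ℝ, μ)` for `0 ≤ p < ∞`: a measurable real-valued function with
`∫ |f|^p dμ < ∞` (for `p = 0` this is just measurability, since the measure is finite). -/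
def MemLpReal {X : Type*} [MeasurableSpace X] (μ : Measure X) (p : ℝ) (f : X → ℝ) : Prop :=
  Measurable f ∧ ∫⁻ x, ENNReal.ofReal (|f x| ^ p) ∂μ < ⊤

theorem stmt8 {X : Type*} [MeasurableSpace X] (μ : Measure X) [IsProbabilityMeasure μ]
    -- `μ` is diffuse (nonatomic): every set of nonzero measure has a subset of strictly
    -- smaller nonzero measure
    (hdiffuse : ∀ s : Set X, MeasurableSet s → μ s ≠ 0 →
      ∃ t ⊆ s, MeasurableSet t ∧ μ t ≠ 0 ∧ μ t < μ s)
    (p : ℝ) (hp : 0 ≤ p) :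
    ¬ ∃ φ : (X → ℝ) → (X → ℝ),
      (∀ f : X → ℝ, MemLpReal μ p f → MemLpReal μ p (φ f)) ∧
      (∀ f : X → ℝ, MemLpReal μ p f → φ f =ᵐ[μ] f) ∧
      (∀ f g : X → ℝ, MemLpReal μ p f → MemLpReal μ p g →
        f ≤ᵐ[μ] g → ∀ x, φ f x ≤ φ g x) := by
  classical
  rintro ⟨φ, hmem, hae, hmono⟩
  -- Step 1: halving lemma
  have half : ∀ s : Set X, MeasurableSet s → μ s ≠ 0 →
      ∃ t, t ⊆ s ∧ MeasurableSet t ∧ μ t ≠ 0 ∧ 2 * μ t ≤ μ s := by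
    intro s hs h0
    obtain ⟨t, hts, htm, ht0, htlt⟩ := hdiffuse s hs h0
    by_cases h : 2 * μ t ≤ μ s
    · exact ⟨t, hts, htm, ht0, h⟩
    · push_neg at h
      refine ⟨s \ t, Set.diff_subset, hs.diff htm, ?_, ?_⟩
      · rw [measure_diff hts htm.nullMeasurableSet (measure_ne_top μ t)]
        exact (tsub_pos_of_lt htlt).ne'
      · rw [measure_diff hts htm.nullMeasurableSet (measure_ne_top μ t),
          ENNReal.mul_sub (fun _ _ => by finiteness)]
        rw [tsub_le_iff_right]
        calc 2 * μ s = μ s + μ s := by ring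
          _ ≤ μ s + 2 * μ t := by gcongr
  -- Step 2: small subsets of arbitrary small measure
  have small : ∀ s : Set X, MeasurableSet s → μ s ≠ 0 → ∀ ε : ℝ≥0∞, ε ≠ 0 →
      ∃ t, t ⊆ s ∧ MeasurableSet t ∧ μ t ≠ 0 ∧ μ t ≤ ε := by
    intro s hs h0 ε hε
    obtain ⟨n, hn⟩ := ENNReal.exists_inv_two_pow_lt hε
    have claim : ∀ k : ℕ, ∃ t, t ⊆ s ∧ MeasurableSet t ∧ μ t ≠ 0 ∧ μ t ≤ 2⁻¹ ^ k := by
      intro k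
      induction k with
      | zero => exact ⟨s, subset_rfl, hs, h0, by simpa using prob_le_one⟩
      | succ k ih =>
        obtain ⟨t, hts, htm, ht0, hle⟩ := ih
        obtain ⟨t', ht's, ht'm, ht'0, ht'le⟩ := half t htm ht0
        refine ⟨t', ht's.trans hts, ht'm, ht'0, ?_⟩
        have h1 : μ t' ≤ 2⁻¹ ^ k / 2 := by
          rw [ENNReal.le_div_iff_mul_le (Or.inl two_ne_zero) (Or.inl ENNReal.ofNat_ne_top)]
          calc μ t' * 2 = 2 * μ t' := mul_comm _ _
            _ ≤ μ t := ht'le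
            _ ≤ 2⁻¹ ^ k := hle
        calc μ t' ≤ 2⁻¹ ^ k / 2 := h1
          _ = 2⁻¹ ^ (k+1) := by rw [pow_succ, ENNReal.div_eq_inv_mul, mul_comm]
    obtain ⟨t, hts, htm, ht0, hle⟩ := claim n
    exact ⟨t, hts, htm, ht0, hle.trans hn.le⟩
  -- Step 3: countable covers by small sets
  have cover : ∀ ε : ℝ≥0∞, ε ≠ 0 → ∃ T : ℕ → Set X,
      (∀ i, MeasurableSet (T i)) ∧ (∀ i, μ (T i) ≤ ε) ∧ μ ((⋃ i, T i)ᶜ) = 0 := by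
    intro ε hε
    set P : (ℕ → Set X) → Prop :=
      fun T => (∀ i, MeasurableSet (T i)) ∧ (∀ i, μ (T i) ≤ ε) with hP
    set m : ℝ≥0∞ := ⨆ (T : ℕ → Set X) (_ : P T), μ (⋃ i, T i) with hm
    have hm_le : m ≤ 1 := iSup_le fun T => iSup_le fun _ => prob_le_one
    have hm_top : m ≠ ⊤ := (hm_le.trans_lt ENNReal.one_lt_top).ne
    have happrox : ∀ n : ℕ, ∃ T, P T ∧ m - ((n : ℝ≥0∞)+1)⁻¹ ≤ μ (⋃ i, T i) := by
      intro n
      by_cases h : m - ((n : ℝ≥0∞)+1)⁻¹ = 0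
      · refine ⟨fun _ => ∅, ⟨fun _ => MeasurableSet.empty,
          fun _ => by rw [measure_empty]; exact zero_le⟩, ?_⟩
        rw [h]; exact zero_le
      · have hm0 : m ≠ 0 := fun h0 => h (by rw [h0, zero_tsub])
        have hlt : m - ((n : ℝ≥0∞)+1)⁻¹ < m :=
          ENNReal.sub_lt_self hm_top hm0 (ENNReal.inv_ne_zero.mpr (by finiteness))
        rw [hm] at hlt
        obtain ⟨T, hT⟩ := lt_iSup_iff.mp hlt
        obtain ⟨hPT, hT'⟩ := lt_iSup_iff.mp hT
        exact ⟨T, hPT, hT'.le⟩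
    choose G hGP hGle using happrox
    set Tm : ℕ → Set X := fun n => G n.unpair.1 n.unpair.2 with hTm
    have hPm : P Tm := ⟨fun i => (hGP _).1 _, fun i => (hGP _).2 _⟩
    have hUnion : ∀ n, μ (⋃ i, G n i) ≤ μ (⋃ i, Tm i) := by
      intro n
      apply measure_mono
      intro x hx
      simp only [Set.mem_iUnion] at hx ⊢
      obtain ⟨i, hi⟩ := hx
      exact ⟨Nat.pair n i, by simpa [hTm, Nat.unpair_pair] using hi⟩
    have hv_le : μ (⋃ i, Tm i) ≤ m := by
      rw [hm]
      exact le_iSup₂ (f := fun (T : ℕ → Set X) (_ : P T) => μ (⋃ i, T i)) Tm hPm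
    have hv_ge : m ≤ μ (⋃ i, Tm i) := by
      refine ENNReal.le_of_forall_pos_le_add fun δ hδ _ => ?_
      obtain ⟨n, hn⟩ := ENNReal.exists_inv_nat_lt
        (show ((δ : ℝ≥0∞)) ≠ 0 by exact_mod_cast hδ.ne')
      have h1 : m ≤ μ (⋃ i, Tm i) + ((n : ℝ≥0∞)+1)⁻¹ :=
        tsub_le_iff_right.mp ((hGle n).trans (hUnion n))
      have h2 : ((n : ℝ≥0∞)+1)⁻¹ ≤ (δ : ℝ≥0∞) := by
        refine le_trans ?_ hn.le
        gcongr
        exact le_add_right le_rfl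
      exact h1.trans (add_le_add_right h2 _)
    have hv : μ (⋃ i, Tm i) = m := le_antisymm hv_le hv_ge
    refine ⟨Tm, hPm.1, hPm.2, ?_⟩
    by_contra hne
    obtain ⟨t, hts, htm, ht0, htε⟩ :=
      small _ (MeasurableSet.iUnion hPm.1).compl hne ε hε
    set T' : ℕ → Set X := fun n => Nat.casesOn n t (fun k => Tm k) with hT'
    have hP' : P T' := by
      constructor
      · intro i; cases i with
        | zero => exact htm
        | succ k => exact hPm.1 k
      · intro i; cases i with
        | zero => exact htε
        | succ k => exact hPm.2 k
    have hU' : (⋃ i, T' i) = t ∪ ⋃ i, Tm i := by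
      ext x
      simp only [Set.mem_iUnion, Set.mem_union]
      constructor
      · rintro ⟨i, hi⟩
        cases i with
        | zero => exact Or.inl hi
        | succ k => exact Or.inr ⟨k, hi⟩
      · rintro (h | ⟨k, hk⟩)
        · exact ⟨0, h⟩
        · exact ⟨k+1, hk⟩
    have hle : μ (⋃ i, T' i) ≤ m := by
      rw [hm]
      exact le_iSup₂ (f := fun (T : ℕ → Set X) (_ : P T) => μ (⋃ i, T i)) T' hP'
    rw [hU', measure_union (Set.disjoint_left.mpr fun x hx hx' => hts hx hx')
      (MeasurableSet.iUnion hPm.1), hv] at hle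
    have hgt : m < μ t + m := by
      rw [add_comm]; exact ENNReal.lt_add_right hm_top ht0
    exact absurd hle (not_le.mpr hgt)
  -- Step 4: weights and cover sizes
  set w : ℕ → ℝ≥0∞ := fun n => ENNReal.ofReal (((n : ℝ)+1) ^ (2*p)) with hw
  have hw0 : ∀ n, w n ≠ 0 := by
    intro n
    simp only [hw, ne_eq, ENNReal.ofReal_eq_zero, not_le]
    exact Real.rpow_pos_of_pos (by positivity) _
  have hwtop : ∀ n, w n ≠ ⊤ := fun n => ENNReal.ofReal_ne_top
  have hw1 : ∀ n, 1 ≤ w n := by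
    intro n
    rw [hw, show (1:ℝ≥0∞) = ENNReal.ofReal 1 by simp]
    exact ENNReal.ofReal_le_ofReal
      (Real.one_le_rpow (le_add_of_nonneg_left (Nat.cast_nonneg n)) (by linarith))
  set εs : ℕ → ℝ≥0∞ := fun n => 2⁻¹ ^ n / w n with hεs
  have hε0 : ∀ n, εs n ≠ 0 := by
    intro n
    rw [hεs]
    simp only [div_eq_mul_inv]
    exact mul_ne_zero (pow_ne_zero _ (by simp)) (ENNReal.inv_ne_zero.mpr (hwtop n))
  have hwε : ∀ n, w n * εs n = 2⁻¹ ^ n := by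
    intro n
    rw [hεs, mul_comm]
    exact ENNReal.div_mul_cancel (hw0 n) (hwtop n)
  have hεle : ∀ n, εs n ≤ 2⁻¹ ^ n := by
    intro n
    simp only [hεs, div_eq_mul_inv]
    calc (2⁻¹:ℝ≥0∞) ^ n * (w n)⁻¹ ≤ 2⁻¹ ^ n * 1 :=
      mul_le_mul_right (ENNReal.inv_le_one.mpr (hw1 n)) _
      _ = 2⁻¹ ^ n := mul_one _
  choose T hTmeas hTle hTnull using fun k => cover (εs k) (hε0 k)
  -- Step 5: set family indexed by lists
  obtain ⟨Aset, hAnil, hAcons⟩ : ∃ A : List ℕ → Set X, A [] = Set.univ ∧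
      ∀ i l, A (i :: l) = T (l.length + 1) i ∩ A l :=
    ⟨fun l => List.rec Set.univ (fun i l' ih => T (l'.length + 1) i ∩ ih) l,
      rfl, fun i l => rfl⟩
  have hAmeas : ∀ l, MeasurableSet (Aset l) := by
    intro l
    induction l with
    | nil => rw [hAnil]; exact MeasurableSet.univ
    | cons i l ih => rw [hAcons]; exact (hTmeas _ _).inter ih
  -- Step 6: the test functions
  obtain ⟨g, hgdef⟩ : ∃ g : List ℕ → X → ℝ,
      ∀ l, g l = (Aset l).indicator (fun _ => (l.length : ℝ)) := ⟨_, fun l => rfl⟩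
  have hgmem : ∀ l, MemLpReal μ p (g l) := by
    intro l
    rw [hgdef]
    refine ⟨measurable_const.indicator (hAmeas l), ?_⟩
    have hbd : ∀ x, ENNReal.ofReal (|((Aset l).indicator (fun _ => (l.length : ℝ))) x| ^ p)
        ≤ ENNReal.ofReal ((l.length : ℝ) ^ p + 1) := by
      intro x
      apply ENNReal.ofReal_le_ofReal
      by_cases hx : x ∈ Aset l
      · rw [Set.indicator_of_mem hx, abs_of_nonneg (Nat.cast_nonneg _)]
        linarith
      · rw [Set.indicator_of_notMem hx, abs_zero]
        have h1 := Real.zero_rpow_le_one p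
        have h2 := Real.rpow_nonneg (Nat.cast_nonneg l.length) p
        linarith
    calc ∫⁻ x, ENNReal.ofReal (|((Aset l).indicator (fun _ => (l.length : ℝ))) x| ^ p) ∂μ
        ≤ ∫⁻ _, ENNReal.ofReal ((l.length : ℝ) ^ p + 1) ∂μ := lintegral_mono hbd
      _ = ENNReal.ofReal ((l.length : ℝ) ^ p + 1) := by
          rw [lintegral_const, measure_univ, mul_one]
      _ < ⊤ := ENNReal.ofReal_lt_top
  -- Step 7: generic point
  set bad : Set X := (⋃ l : List ℕ, {x | φ (g l) x ≠ g l x}) ∪ ⋃ k : ℕ, (⋃ i, T (k+1) i)ᶜ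
    with hbaddef
  have hbad0 : μ bad = 0 := by
    apply measure_union_null
    · exact measure_iUnion_null fun l => ae_iff.mp (hae (g l) (hgmem l))
    · exact measure_iUnion_null fun k => hTnull (k+1)
  obtain ⟨x₀, hx₀⟩ : ∃ x, x ∉ bad := by
    by_contra hcon
    push_neg at hcon
    have h1 : μ Set.univ = 0 := measure_mono_null (fun x _ => hcon x) hbad0
    rw [measure_univ] at h1
    exact one_ne_zero h1
  have hx₀g : ∀ l, φ (g l) x₀ = g l x₀ := by
    intro l
    by_contra hne
    exact hx₀ (Set.mem_union_left _ (Set.mem_iUnion.mpr ⟨l, hne⟩))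
  have hx₀T : ∀ k : ℕ, ∃ i, x₀ ∈ T (k+1) i := by
    intro k
    by_contra hne
    push_neg at hne
    refine hx₀ (Set.mem_union_right _ (Set.mem_iUnion.mpr ⟨k, fun h => ?_⟩))
    obtain ⟨i, hi⟩ := Set.mem_iUnion.mp h
    exact hne i hi
  choose I hI using hx₀T
  -- Step 8: a nested branch through x₀
  obtain ⟨L, hL0, hLsucc⟩ : ∃ L : ℕ → List ℕ, L 0 = [] ∧
      ∀ k, L (k+1) = I (L k).length :: L k :=
    ⟨fun k => (fun l => I l.length :: l)^[k] [], rfl,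
      fun k => Function.iterate_succ_apply' _ k []⟩
  have hLlen : ∀ k, (L k).length = k := by
    intro k
    induction k with
    | zero => rw [hL0]; rfl
    | succ k ih => rw [hLsucc, List.length_cons, ih]
  have hLmem : ∀ k, x₀ ∈ Aset (L k) := by
    intro k
    induction k with
    | zero => rw [hL0, hAnil]; trivial
    | succ k ih =>
      rw [hLsucc, hAcons, hLlen k]
      exact ⟨hI k, ih⟩
  have hsub : ∀ k, Aset (L (k+1)) ⊆ Aset (L k) := by
    intro k
    rw [hLsucc, hAcons]
    exact Set.inter_subset_right
  have hanti : ∀ j k, j ≤ k → Aset (L k) ⊆ Aset (L j) := by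
    intro j k hjk
    induction hjk with
    | refl => exact subset_rfl
    | step h ih => exact (hsub _).trans ih
  have hμA : ∀ k, μ (Aset (L (k+1))) ≤ εs (k+1) := by
    intro k
    rw [hLsucc, hAcons]
    refine le_trans (measure_mono Set.inter_subset_left) ?_
    rw [hLlen k]
    exact hTle _ _
  -- Step 9: the unbounded function
  obtain ⟨F, hFdef⟩ : ∃ F : X → ℝ≥0∞,
      ∀ x, F x = ∑' n, (Aset (L n)).indicator (fun _ => (n : ℝ≥0∞)) x := ⟨_, fun x => rfl⟩
  obtain ⟨f, hfdef⟩ : ∃ f : X → ℝ, ∀ x, f x = (F x).toReal := ⟨_, fun x => rfl⟩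
  have hFmeas : Measurable F := by
    have h1 : Measurable fun x => ∑' n, (Aset (L n)).indicator (fun _ => (n : ℝ≥0∞)) x :=
      Measurable.ennreal_tsum fun n => measurable_const.indicator (hAmeas _)
    have h2 : F = fun x => ∑' n, (Aset (L n)).indicator (fun _ => (n : ℝ≥0∞)) x :=
      funext hFdef
    rw [h2]; exact h1
  have hfmeas : Measurable f := by
    have h2 : f = fun x => (F x).toReal := funext hfdef
    rw [h2]; exact hFmeas.ennreal_toReal
  have hFge : ∀ (x : X) (k : ℕ), x ∈ Aset (L k) → (k : ℝ≥0∞) ≤ F x := by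
    intro x k hx
    rw [hFdef]
    have h1 := ENNReal.le_tsum (f := fun n => (Aset (L n)).indicator (fun _ => (n : ℝ≥0∞)) x) k
    rwa [Set.indicator_of_mem hx] at h1
  have hFle : ∀ (x : X) (m : ℕ), x ∉ Aset (L m) → F x ≤ (m : ℝ≥0∞) * m := by
    intro x m hx
    have hterm : ∀ n, (Aset (L n)).indicator (fun _ => (n : ℝ≥0∞)) x
        ≤ if n < m then (n : ℝ≥0∞) else 0 := by
      intro n
      by_cases hn : n < m
      · rw [if_pos hn]
        by_cases hmem : x ∈ Aset (L n)
        · rw [Set.indicator_of_mem hmem]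
        · rw [Set.indicator_of_notMem hmem]; exact zero_le
      · rw [if_neg hn]
        push_neg at hn
        rw [Set.indicator_of_notMem (fun hmem => hx (hanti m n hn hmem))]
    rw [hFdef]
    calc (∑' n, (Aset (L n)).indicator (fun _ => (n : ℝ≥0∞)) x)
        ≤ ∑' n, if n < m then (n : ℝ≥0∞) else 0 := ENNReal.tsum_le_tsum hterm
      _ = ∑ n ∈ Finset.range m, (if n < m then (n : ℝ≥0∞) else 0) :=
          tsum_eq_sum (fun n hn => if_neg (by simpa using hn))
      _ ≤ ∑ n ∈ Finset.range m, (m : ℝ≥0∞) := by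
          refine Finset.sum_le_sum fun n hn => ?_
          rw [if_pos (Finset.mem_range.mp hn)]
          exact_mod_cast Nat.cast_le.mpr (Finset.mem_range.mp hn).le
      _ = (m : ℝ≥0∞) * m := by
          rw [Finset.sum_const, Finset.card_range, nsmul_eq_mul]
  have hSinf : μ {x | F x = ⊤} = 0 := by
    have hss : {x | F x = ⊤} ⊆ ⋂ k, Aset (L k) := by
      intro x hx
      refine Set.mem_iInter.mpr fun k => ?_
      by_contra hk
      have h1 := hFle x k hk
      rw [Set.mem_setOf_eq.mp hx] at h1
      exact absurd (top_le_iff.mp h1) (by finiteness)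
    refine measure_mono_null hss ?_
    by_contra h0
    obtain ⟨n, hn⟩ := ENNReal.exists_inv_two_pow_lt h0
    have h1 : μ (⋂ k, Aset (L k)) ≤ 2⁻¹ ^ (n+1) :=
      le_trans (measure_mono (Set.iInter_subset _ (n+1))) ((hμA n).trans (hεle (n+1)))
    have h2 : (2⁻¹ : ℝ≥0∞) ^ (n+1) ≤ 2⁻¹ ^ n :=
      pow_le_pow_of_le_one (zero_le) (ENNReal.inv_le_one.mpr one_le_two) (Nat.le_succ n)
    exact absurd hn (not_lt.mpr (h1.trans h2))
  -- Step 10: f is in L^p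
  have hmemf : MemLpReal μ p f := by
    refine ⟨hfmeas, ?_⟩
    have hbd : ∀ x, ENNReal.ofReal (|f x| ^ p)
        ≤ 1 + ∑' n, (Aset (L n)).indicator (fun _ => w n) x := by
      intro x
      by_cases hx : ∃ m, x ∉ Aset (L m)
      · have hspec : x ∉ Aset (L (Nat.find hx)) := Nat.find_spec hx
        have hpos : Nat.find hx ≠ 0 := by
          intro h
          rw [h, hL0, hAnil] at hspec
          exact hspec trivial
        obtain ⟨n, hn⟩ := Nat.exists_eq_succ_of_ne_zero hpos
        have hxn : x ∈ Aset (L n) := by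
          by_contra hc
          exact Nat.find_min hx (by omega) hc
        have hFx : F x ≤ ((n+1 : ℕ) : ℝ≥0∞) * ((n+1 : ℕ) : ℝ≥0∞) := by
          have := hFle x (Nat.find hx) hspec
          rwa [hn] at this
        have hfle : f x ≤ ((n+1 : ℕ) : ℝ) * ((n+1 : ℕ) : ℝ) := by
          have h1 := ENNReal.toReal_mono (by finiteness) hFx
          rw [hfdef]
          rwa [ENNReal.toReal_mul, ENNReal.toReal_natCast] at h1
        have h1 : |f x| ^ p ≤ (((n+1 : ℕ) : ℝ) * ((n+1 : ℕ) : ℝ)) ^ p := by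
          refine Real.rpow_le_rpow (abs_nonneg _) ?_ hp
          rw [abs_of_nonneg (by rw [hfdef]; exact ENNReal.toReal_nonneg)]
          exact hfle
        have h2 : (((n+1 : ℕ) : ℝ) * ((n+1 : ℕ) : ℝ)) ^ p = ((n : ℝ)+1) ^ (2*p) := by
          have h3 : ((n+1 : ℕ) : ℝ) * ((n+1 : ℕ) : ℝ) = ((n : ℝ)+1) ^ (2 : ℕ) := by
            push_cast; ring
          rw [h3, ← Real.rpow_natCast ((n : ℝ)+1) 2, ← Real.rpow_mul (by positivity)]
          norm_num
        calc ENNReal.ofReal (|f x| ^ p) ≤ w n := by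
              rw [hw]
              exact ENNReal.ofReal_le_ofReal (h2 ▸ h1)
          _ = (Aset (L n)).indicator (fun _ => w n) x := (Set.indicator_of_mem hxn (fun _ => w n)).symm
          _ ≤ ∑' n', (Aset (L n')).indicator (fun _ => w n') x :=
              ENNReal.le_tsum (f := fun n' => (Aset (L n')).indicator (fun _ => w n') x) n
          _ ≤ 1 + ∑' n', (Aset (L n')).indicator (fun _ => w n') x := self_le_add_left _ _
      · push_neg at hx
        have hFtop : F x = ⊤ := by
          by_contra hne
          obtain ⟨k, hk⟩ := ENNReal.exists_nat_gt hne
          exact absurd (hFge x k (hx k)) (not_le.mpr hk)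
        have hf0 : f x = 0 := by rw [hfdef, hFtop, ENNReal.toReal_top]
        rw [hf0, abs_zero]
        calc ENNReal.ofReal ((0 : ℝ) ^ p) ≤ ENNReal.ofReal 1 :=
              ENNReal.ofReal_le_ofReal (Real.zero_rpow_le_one p)
          _ = 1 := ENNReal.ofReal_one
          _ ≤ 1 + ∑' n', (Aset (L n')).indicator (fun _ => w n') x := le_self_add
    have hterm2 : ∀ n, w n * μ (Aset (L n)) ≤ (if n = 0 then 1 else 0) + 2⁻¹ ^ n := by
      intro n
      cases n with
      | zero =>
        rw [if_pos rfl, hL0, hAnil, measure_univ, mul_one]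
        have : w 0 = 1 := by
          rw [hw]
          norm_num
        rw [this]
        exact le_add_right le_rfl
      | succ k =>
        rw [if_neg (Nat.succ_ne_zero k), zero_add]
        calc w (k+1) * μ (Aset (L (k+1))) ≤ w (k+1) * εs (k+1) :=
              mul_le_mul_right (hμA k) _
          _ = 2⁻¹ ^ (k+1) := hwε (k+1)
    calc ∫⁻ x, ENNReal.ofReal (|f x| ^ p) ∂μ
        ≤ ∫⁻ x, (1 + ∑' n, (Aset (L n)).indicator (fun _ => w n) x) ∂μ :=
          lintegral_mono hbd
      _ = ∫⁻ _, (1:ℝ≥0∞) ∂μ + ∫⁻ x, ∑' n, (Aset (L n)).indicator (fun _ => w n) x ∂μ :=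
          lintegral_add_left measurable_const _
      _ = 1 + ∑' n, w n * μ (Aset (L n)) := by
          rw [lintegral_const, measure_univ, mul_one,
            lintegral_tsum (fun n => (measurable_const.indicator (hAmeas _)).aemeasurable)]
          congr 1
          exact tsum_congr fun n => lintegral_indicator_const (hAmeas _) _
      _ ≤ 1 + ∑' n, ((if n = 0 then (1:ℝ≥0∞) else 0) + 2⁻¹ ^ n) := by
          exact add_le_add_right (ENNReal.tsum_le_tsum hterm2) 1
      _ = 1 + (1 + (1 - 2⁻¹)⁻¹) := by
          rw [ENNReal.tsum_add, tsum_ite_eq, ENNReal.tsum_geometric]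
      _ < ⊤ := by
          rw [ENNReal.one_sub_inv_two, inv_inv]
          finiteness
  -- Step 11: g (L k) ≤ f a.e.
  have hglef : ∀ k, g (L k) ≤ᵐ[μ] f := by
    intro k
    have hss : {x | ¬ g (L k) x ≤ f x} ⊆ {x | F x = ⊤} := by
      intro x hx
      by_contra hFx
      apply hx
      rw [hgdef]
      by_cases hxk : x ∈ Aset (L k)
      · rw [Set.indicator_of_mem hxk]
        have h1 := ENNReal.toReal_mono hFx (hFge x k hxk)
        rw [ENNReal.toReal_natCast] at h1
        rw [hLlen k, hfdef]
        exact h1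
      · rw [Set.indicator_of_notMem hxk, hfdef]
        exact ENNReal.toReal_nonneg
    exact ae_iff.mpr (measure_mono_null hss hSinf)
  -- Step 12: the contradiction
  have hcontra : ∀ k : ℕ, (k : ℝ) ≤ φ f x₀ := by
    intro k
    have h1 := hmono (g (L k)) f (hgmem _) hmemf (hglef k) x₀
    have h2 := hx₀g (L k)
    have h3 : g (L k) x₀ = (k : ℝ) := by
      rw [hgdef, Set.indicator_of_mem (hLmem k), hLlen k]
    rw [h2, h3] at h1
    exact h1
  obtain ⟨k, hk⟩ := exists_nat_gt (φ f x₀)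
  exact absurd (hcontra k) (not_le.mpr hk)
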